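/- Let n, k, j, l be integers with 1 ≤ k < j ≤ n and C(j-1,k) < l ≤ C(j,k). In the polynomial ring R = K[x_1,…,x_n] over a field K, the ideal generated by the monomials ∏_{t ∈ ⋃_{A∈F} A} x_t, where F ranges over all families of l pairwise distinct k-subsets of {1,…,n}, is equal to the ideal generated by all squarefree monomials of degree j, i.e. the monomials ∏_{t∈σ} x_t with σ a j-subset of {1,…,n}. (In the paper's notation: the l-fold lcm-ideal I_{k,n,l} of the k-out-of-n:F failure ideal equals I_{j,n}.) -/

import Mathlib

open MvPolynomial

/-- **Theorem 1 (ideal form).** For `1 ≤ k < j ≤ n` and `C(j-1,k) < l ≤ C(j,k)`, the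
`l`-fold lcm-ideal of the `k`-out-of-`n`:F failure ideal, generated by the monomials
`∏_{t ∈ ⋃ F} x_t` for families `F` of `l` pairwise distinct `k`-subsets of `{1,…,n}`,
equals the ideal generated by all squarefree monomials of degree `j`. -/
theorem kn_lcm_ideal_eq_jn_ideal {K : Type*} [Field K] (n k j l : ℕ)
    (hk : 1 ≤ k) (hkj : k < j) (hjn : j ≤ n)
    (hl1 : (j - 1).choose k < l) (hl2 : l ≤ j.choose k) :
    Ideal.span {m : MvPolynomial (Fin n) K | ∃ F : Finset (Finset (Fin n)),
        F.card = l ∧ (∀ A ∈ F, A.card = k) ∧ m = ∏ t ∈ F.sup id, X t} =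
    Ideal.span {m : MvPolynomial (Fin n) K | ∃ σ : Finset (Fin n),
        σ.card = j ∧ m = ∏ t ∈ σ, X t} := by
  apply le_antisymm
  · rw [Ideal.span_le]
    rintro m ⟨F, hcard, hk', rfl⟩
    have hsub : F ⊆ (F.sup id).powersetCard k := by
      intro A hA
      rw [Finset.mem_powersetCard]
      exact ⟨Finset.le_sup (f := id) hA, hk' A hA⟩
    have hge : j ≤ (F.sup id).card := by
      by_contra h
      push_neg at h
      have : l ≤ (j - 1).choose k := by
        calc l = F.card := hcard.symm
          _ ≤ ((F.sup id).powersetCard k).card := Finset.card_le_card hsub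
          _ = (F.sup id).card.choose k := Finset.card_powersetCard _ _
          _ ≤ (j - 1).choose k := Nat.choose_le_choose k (by omega)
      omega
    obtain ⟨σ, hσsub, hσcard⟩ := Finset.exists_subset_card_eq hge
    rw [← Finset.prod_sdiff hσsub]
    exact Ideal.mul_mem_left _ _ (Ideal.subset_span ⟨σ, hσcard, rfl⟩)
  · rw [Ideal.span_le]
    rintro m ⟨σ, hσ, rfl⟩
    have hle : l ≤ (σ.powersetCard k).card := by
      rw [Finset.card_powersetCard, hσ]; exact hl2
    obtain ⟨F, hFsub, hFcard⟩ := Finset.exists_subset_card_eq hle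
    have hAll : ∀ A ∈ F, A.card = k := fun A hA =>
      (Finset.mem_powersetCard.mp (hFsub hA)).2
    have hsup : F.sup id ⊆ σ := Finset.sup_le fun A hA =>
      (Finset.mem_powersetCard.mp (hFsub hA)).1
    rw [← Finset.prod_sdiff hsup]
    exact Ideal.mul_mem_left _ _ (Ideal.subset_span ⟨F, hFcard, hAll, rfl⟩)
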